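/- Let Ω be an infinite set. Then every permutation of Ω is a product of two involutions; that is, for every bijection a : Ω → Ω there exist bijections i, j : Ω → Ω with i² = 1_Ω and j² = 1_Ω such that a = i ∘ j. -/

import Mathlib

/-- Every permutation of an infinite set `Ω` is a product of two involutions. -/
theorem perm_eq_mul_of_involutions (Ω : Type*) [Infinite Ω] (a : Equiv.Perm Ω) :
    ∃ i j : Equiv.Perm Ω, i * i = 1 ∧ j * j = 1 ∧ a = i * j := by
  classical
  letI s : Setoid Ω := ⟨a.SameCycle,
    ⟨fun x => Equiv.Perm.SameCycle.refl a x, fun h => h.symm, fun h h' => h.trans h'⟩⟩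
  let rep : Ω → Ω := fun x => (Quotient.mk s x).out
  have hrep : ∀ x, a.SameCycle (rep x) x := fun x => Quotient.mk_out x
  have hrepeq : ∀ x y, a.SameCycle x y → rep x = rep y := by
    intro x y h
    simp only [rep]
    congr 1
    exact Quotient.sound h
  choose k hk using fun x => hrep x
  -- hk : ∀ x, (a ^ k x) (rep x) = x
  let f : Ω → Ω := fun x => (a ^ (-(k x))) (rep x)
  have key : ∀ (x : Ω) (m : ℤ), (a ^ m) (rep x) = x → f x = (a ^ (-m)) (rep x) := by
    intro x m h
    have h1 : (a ^ (k x)) (rep x) = (a ^ m) (rep x) := (hk x).trans h.symm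
    have h2 := congrArg (a ^ (-(k x) - m)) h1
    simpa only [← Equiv.Perm.mul_apply, ← zpow_add, f,
      show -(k x) - m + k x = -m by ring, show -(k x) - m + m = -(k x) by ring] using h2.symm
  have hrepf : ∀ x, rep (f x) = rep x := by
    intro x
    apply hrepeq
    have h1 : a.SameCycle (rep x) (f x) := ⟨-(k x), rfl⟩
    exact h1.symm.trans (hrep x)
  have hff : ∀ x, f (f x) = x := by
    intro x
    have h1 : (a ^ (-(k x))) (rep (f x)) = f x := by rw [hrepf]
    have := key (f x) (-(k x)) h1
    rw [this, hrepf, neg_neg, hk]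
  have hfa : ∀ x, f (a x) = a⁻¹ (f x) := by
    intro x
    have hr : rep (a x) = rep x := (hrepeq x (a x) ⟨1, by simp⟩).symm
    have h1 : (a ^ (k x + 1)) (rep (a x)) = a x := by
      rw [hr, add_comm, zpow_add, zpow_one, Equiv.Perm.mul_apply, hk]
    have := key (a x) (k x + 1) h1
    rw [this, hr]
    show (a ^ (-(k x + 1))) (rep x) = a⁻¹ ((a ^ (-(k x))) (rep x))
    rw [← Equiv.Perm.mul_apply, ← zpow_neg_one, ← zpow_add]
    ring_nf
  let i : Equiv.Perm Ω := Function.Involutive.toPerm f hff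
  refine ⟨i, i * a, ?_, ?_, ?_⟩
  · ext x; exact hff x
  · ext x
    simp only [Equiv.Perm.mul_apply, Equiv.Perm.one_apply]
    show f (a (f (a x))) = x
    rw [hfa, hff]; exact Equiv.symm_apply_apply a x
  · ext x
    simp only [Equiv.Perm.mul_apply]
    show a x = f (f (a x))
    rw [hff]
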